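/- Characterization of mean-value functionals: a function F : 𝓧 → ℝ is of the form F_f for some f ∈ L¹_loc(X) if and only if the extension G_F : 𝓜 → ℝ given by G_F(η) = ‖η‖F(η) (and G_F(0)=0) satisfies G_F(tη) = t·G_F(η) for all t ∈ [0,1], η ∈ 𝓜, and G_F(Σᵢ ηᵢ) = Σᵢ G_F(ηᵢ) whenever ηᵢ ∈ 𝓜 and Σᵢ ηᵢ ∈ 𝓜. -/

import Mathlib

open MeasureTheory Set Filter
open scoped ENNReal Classical

variable {X : Type*} [MetricSpace X] [MeasurableSpace X]

/-- Total mass of a measure, as a real number. -/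
noncomputable def mass (ν : Measure X) : ℝ := (ν Set.univ).toReal

/-- The support of a measure. -/
def msupp (ν : Measure X) : Set X := {x : X | ∀ ε : ℝ, 0 < ε → 0 < ν (Metric.ball x ε)}

/-- The set `𝓜` of measures dominated by `μ` with compact support. -/
def MM (μ : Measure X) : Set (Measure X) := {ν | ν ≤ μ ∧ IsCompact (msupp ν)}

/-- Gauge function `h` used in the definition of the mass transport metric. -/
def IsGauge (h : ℝ → ℝ) : Prop :=
  StrictMonoOn h (Set.Ici 0) ∧ ContinuousOn h (Set.Ici 0) ∧ h 0 = 0 ∧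
  Tendsto (fun ε => h ε / ε) (nhdsWithin 0 (Set.Ioi 0)) (nhds 0) ∧
  (∀ a b : ℝ, 0 ≤ a → 0 ≤ b → h a + h b ≤ h (a + b)) ∧
  Tendsto h atTop atTop

/-- `Γ_{ε,δ}(ν,η) ≠ ∅`: existence of a countable mass-transport decomposition. -/
def GammaDecomp (μ : Measure X) (ε δ : ℝ) (ν η : Measure X) : Prop :=
  ∃ νi ηi : ℕ → Measure X,
    (∀ i, νi i ∈ MM μ) ∧ (∀ i, ηi i ∈ MM μ) ∧
    ν = Measure.sum νi ∧ η = Measure.sum ηi ∧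
    (∃ S : ℝ, HasSum (fun i => |mass (νi i) - mass (ηi i)|) S ∧ S ≤ δ) ∧
    (∀ i, Metric.diam (msupp (νi i) ∪ msupp (ηi i)) ≤ ε)

/-- The mass transport metric `d_𝓜`. -/
noncomputable def dM (h : ℝ → ℝ) (μ : Measure X) (ν η : Measure X) : ℝ :=
  sInf {ε : ℝ | 0 < ε ∧ GammaDecomp μ ε (h ε) ν η}

/-- A rectifiable curve in `𝓜` subparametrized by arc-length: a `1`-Lipschitz map
`[0,b] → (𝓜, d_𝓜)`. -/
def IsCurveM (h : ℝ → ℝ) (μ : Measure X) (b : ℝ) (γ : ℝ → Measure X) : Prop :=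
  0 ≤ b ∧ (∀ t ∈ Icc (0:ℝ) b, γ t ∈ MM μ) ∧
  ∀ s ∈ Icc (0:ℝ) b, ∀ t ∈ Icc (0:ℝ) b, dM h μ (γ s) (γ t) ≤ |s - t|

/-- A rectifiable curve in `𝓧 = 𝓜 \ {0}` subparametrized by arc-length. -/
def IsCurveX (h : ℝ → ℝ) (μ : Measure X) (b : ℝ) (γ : ℝ → Measure X) : Prop :=
  IsCurveM h μ b γ ∧ ∀ t ∈ Icc (0:ℝ) b, γ t ≠ 0

/-- The mean value functional `F_f(η) = (1/‖η‖) ∫ f dη`. -/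
noncomputable def FfM (f : X → ℝ) (η : Measure X) : ℝ := (∫ x, f x ∂η) / mass η

/-- `r_F^ε(η)`. -/
noncomputable def rGradE (h : ℝ → ℝ) (μ : Measure X) (F : Measure X → ℝ) (ε : ℝ)
    (η : Measure X) : ℝ≥0∞ :=
  sSup {r : ℝ≥0∞ | ∃ (b : ℝ) (γ : ℝ → Measure X) (s : ℝ),
    IsCurveX h μ b γ ∧ γ 0 = η ∧ 0 < s ∧ s < ε ∧ s < b ∧
    r = ENNReal.ofReal (|F (γ s) - F η| / s)}

/-- The upper gradient `r_F(η) = lim_{ε→0} r_F^ε(η)`. -/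
noncomputable def rGrad (h : ℝ → ℝ) (μ : Measure X) (F : Measure X → ℝ)
    (η : Measure X) : ℝ≥0∞ :=
  ⨅ (ε : ℝ) (_ : 0 < ε), rGradE h μ F ε η

/-- Upper semicontinuous regularization along curves of `g : 𝓧 → [0,∞]`. -/
noncomputable def breveG (h : ℝ → ℝ) (μ : Measure X) (g : Measure X → ℝ≥0∞)
    (η : Measure X) : ℝ≥0∞ :=
  ⨅ (s : ℝ) (_ : 0 < s), sSup {r : ℝ≥0∞ | ∃ (b : ℝ) (γ : ℝ → Measure X) (t : ℝ),
    IsCurveX h μ b γ ∧ γ 0 = η ∧ 0 ≤ t ∧ t < s ∧ t ≤ b ∧ r = g (γ t)}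

/-- `sup { Σᵢ G(ηᵢ)^p ‖ηᵢ‖ }` over finite disjointly supported families in `𝓧`. -/
noncomputable def LpPow (μ : Measure X) (p : ℝ) (G : Measure X → ℝ≥0∞) : ℝ≥0∞ :=
  sSup {r : ℝ≥0∞ | ∃ (k : ℕ) (η : Fin k → Measure X),
    (∀ i, η i ∈ MM μ ∧ η i ≠ 0) ∧
    (∀ i j, i ≠ j → Disjoint (msupp (η i)) (msupp (η j))) ∧
    r = ∑ i, (G (η i)) ^ p * (η i) Set.univ}

/-- The `𝓛^p(𝓧)` norm of `F : 𝓧 → ℝ`. -/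
noncomputable def LpNorm (μ : Measure X) (p : ℝ) (F : Measure X → ℝ) : ℝ≥0∞ :=
  (LpPow μ p (fun η => ENNReal.ofReal |F η|)) ^ (1 / p)

/-- The `𝓛^p(𝓧)` norm for an extended exponent `p ∈ [1,∞]`. -/
noncomputable def LpNormE (μ : Measure X) (p : ℝ≥0∞) (F : Measure X → ℝ) : ℝ≥0∞ :=
  if p = ∞ then ⨆ (η : Measure X) (_ : η ∈ MM μ ∧ η ≠ 0), ENNReal.ofReal |F η|
  else LpNorm μ p.toReal F


/-- The extension `G_F(η) = ‖η‖ F(η)` of `F : 𝓧 → ℝ` to `𝓜`, with `G_F = 0` outside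
`𝓧`. -/
noncomputable def GFext {X : Type*} [MetricSpace X] [MeasurableSpace X]
    (μ : Measure X) (F : Measure X → ℝ) (η : Measure X) : ℝ :=
  if η ∈ MM μ ∧ η ≠ 0 then mass η * F η else 0

set_option linter.unusedSectionVars false
set_option maxHeartbeats 1000000

section AuxLemmas

lemma isClosed_msupp (ν : Measure X) : IsClosed (msupp ν) := by
  rw [← isOpen_compl_iff]
  rw [isOpen_iff_forall_mem_open]
  intro x hx
  simp only [msupp, mem_compl_iff, mem_setOf_eq, not_forall] at hx
  obtain ⟨ε, hε, hν⟩ := hx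
  push_neg at hν
  refine ⟨Metric.ball x (ε/2), ?_, Metric.isOpen_ball, by simp [half_pos hε]⟩
  intro y hy
  simp only [mem_compl_iff, msupp, mem_setOf_eq, not_forall]
  refine ⟨ε/2, half_pos hε, ?_⟩
  push_neg
  refine le_trans (measure_mono ?_) hν
  intro z hz
  calc dist z x ≤ dist z y + dist y x := dist_triangle _ _ _
  _ < ε/2 + ε/2 := add_lt_add (Metric.mem_ball.mp hz) (Metric.mem_ball.mp hy)
  _ = ε := by ring

lemma msupp_compl_null [TopologicalSpace.SeparableSpace X] (ν : Measure X) :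
    ν (msupp ν)ᶜ = 0 := by
  haveI : SecondCountableTopology X := UniformSpace.secondCountable_of_separable X
  have h : ∀ x ∈ (msupp ν)ᶜ, ∃ ε : ℝ, 0 < ε ∧ ν (Metric.ball x ε) = 0 := by
    intro x hx
    simp only [mem_compl_iff, msupp, mem_setOf_eq, not_forall] at hx
    obtain ⟨ε, hε, hν⟩ := hx
    push_neg at hν
    exact ⟨ε, hε, le_antisymm hν (zero_le)⟩
  choose! ε hε hν using h
  set S : Set (Set X) := (fun x => Metric.ball x (ε x)) '' (msupp ν)ᶜ with hS
  obtain ⟨T, hTc, hTS, hTU⟩ := TopologicalSpace.isOpen_sUnion_countable S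
    (by rintro s ⟨x, -, rfl⟩; exact Metric.isOpen_ball)
  have hcover : (msupp ν)ᶜ ⊆ ⋃₀ T := by
    rw [hTU]
    intro x hx
    exact ⟨Metric.ball x (ε x), ⟨x, hx, rfl⟩, Metric.mem_ball_self (hε x hx)⟩
  refine measure_mono_null hcover ?_
  refine (measure_sUnion_null_iff hTc).mpr fun s hs => ?_
  obtain ⟨x, hx, rfl⟩ := hTS hs
  exact hν x hx

section B
variable [TopologicalSpace.SeparableSpace X] [BorelSpace X]

lemma restrict_of_msupp_subset {η : Measure X} {K : Set X} (hK : MeasurableSet K)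
    (h : msupp η ⊆ K) : η.restrict K = η := by
  have h0 : η Kᶜ = 0 :=
    measure_mono_null (compl_subset_compl.mpr h) (msupp_compl_null η)
  conv_rhs => rw [← Measure.restrict_add_restrict_compl (μ := η) hK]
  rw [Measure.restrict_eq_zero.mpr h0, add_zero]

lemma univ_lt_top_of_MM {μ η : Measure X} [μ.Regular] (hη : η ∈ MM μ) : η univ < ∞ := by
  have h1 : η univ = η (msupp η) := by
    conv_lhs => rw [← restrict_of_msupp_subset (isClosed_msupp η).measurableSet
      (subset_refl _), Measure.restrict_apply_univ]
  rw [h1]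
  exact lt_of_le_of_lt (Measure.le_iff.mp hη.1 _ (isClosed_msupp η).measurableSet)
    hη.2.measure_lt_top

lemma mass_pos_of_MM {μ η : Measure X} [μ.Regular] (hη : η ∈ MM μ) (hne : η ≠ 0) :
    0 < mass η :=
  ENNReal.toReal_pos (fun h => hne (Measure.measure_univ_eq_zero.mp h))
    (univ_lt_top_of_MM hη).ne

lemma msupp_smul_subset (c : ℝ≥0∞) (ν : Measure X) : msupp (c • ν) ⊆ msupp ν := by
  intro x hx ε hε
  have := hx ε hε
  rw [Measure.smul_apply, smul_eq_mul] at this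
  exact pos_iff_ne_zero.mpr fun h => by simp [h] at this

lemma msupp_restrict_subset (ν : Measure X) (A : Set X) :
    msupp (ν.restrict A) ⊆ closure A := by
  intro x hx
  rw [Metric.mem_closure_iff]
  intro ε hε
  have := hx ε hε
  rw [Measure.restrict_apply Metric.isOpen_ball.measurableSet] at this
  obtain ⟨z, hz1, hz2⟩ := nonempty_of_measure_ne_zero this.ne'
  exact ⟨z, hz2, by rw [dist_comm]; exact Metric.mem_ball.mp hz1⟩

lemma restrict_mem_MM {μ : Measure X} {A K : Set X} (hA : MeasurableSet A)
    (hK : IsCompact K) (hAK : A ⊆ K) : μ.restrict A ∈ MM μ := by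
  refine ⟨Measure.restrict_le_self, hK.of_isClosed_subset (isClosed_msupp _) ?_⟩
  exact (msupp_restrict_subset μ A).trans (closure_minimal hAK hK.isClosed)

lemma smul_restrict_mem_MM {μ : Measure X} {A K : Set X} {c : ℝ≥0∞} (hc : c ≤ 1)
    (hA : MeasurableSet A) (hK : IsCompact K) (hAK : A ⊆ K) :
    c • μ.restrict A ∈ MM μ := by
  constructor
  · refine Measure.le_iff.mpr fun s hs => ?_
    rw [Measure.smul_apply, smul_eq_mul]
    calc c * μ.restrict A s ≤ 1 * μ s :=
      mul_le_mul' hc (le_trans (Measure.le_iff.mp Measure.restrict_le_self s hs) le_rfl)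
    _ = μ s := one_mul _
  · refine hK.of_isClosed_subset (isClosed_msupp _) ?_
    exact ((msupp_smul_subset c _).trans (msupp_restrict_subset μ A)).trans
      (closure_minimal hAK hK.isClosed)

lemma integrable_of_MM {μ η : Measure X} [μ.Regular] {f : X → ℝ}
    (hf : LocallyIntegrable f μ) (hη : η ∈ MM μ) : Integrable f η := by
  haveI : SecondCountableTopology X := UniformSpace.secondCountable_of_separable X
  constructor
  · exact hf.aestronglyMeasurable.mono_ac (Measure.absolutelyContinuous_of_le hη.1)
  · have hK : MeasurableSet (msupp η) := (isClosed_msupp η).measurableSet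
    rw [HasFiniteIntegral]
    calc ∫⁻ x, ‖f x‖₊ ∂η = ∫⁻ x, ‖f x‖₊ ∂(η.restrict (msupp η)) := by
          rw [restrict_of_msupp_subset hK (subset_refl _)]
    _ ≤ ∫⁻ x, ‖f x‖₊ ∂(μ.restrict (msupp η)) :=
          lintegral_mono' (Measure.restrict_mono (subset_refl _) hη.1) le_rfl
    _ < ∞ := (hf.integrableOn_isCompact hη.2).2


lemma GFext_eq_integral {μ η : Measure X} [μ.Regular] {F : Measure X → ℝ} {f : X → ℝ}
    (hF : ∀ η ∈ MM μ, η ≠ 0 → F η = FfM f η) (hη : η ∈ MM μ) :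
    GFext μ F η = ∫ x, f x ∂η := by
  rcases eq_or_ne η 0 with rfl | hne
  · simp [GFext]
  · rw [GFext, if_pos ⟨hη, hne⟩, hF η hη hne, FfM]
    field_simp [(mass_pos_of_MM hη hne).ne']

lemma GFext_restrict_hasSum {μ : Measure X} {F : Measure X → ℝ}
    (Hadd : ∀ ηi : ℕ → Measure X, (∀ i, ηi i ∈ MM μ) → Measure.sum ηi ∈ MM μ →
      HasSum (fun i => GFext μ F (ηi i)) (GFext μ F (Measure.sum ηi)))
    {K : Set X} (hK : IsCompact K) {s : ℕ → Set X} (hm : ∀ i, MeasurableSet (s i))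
    (hd : Pairwise (Function.onFun Disjoint s)) (hsub : ∀ i, s i ⊆ K) :
    HasSum (fun i => GFext μ F (μ.restrict (s i)))
      (GFext μ F (μ.restrict (⋃ i, s i))) := by
  have hsum : μ.restrict (⋃ i, s i) = Measure.sum (fun i => μ.restrict (s i)) :=
    Measure.restrict_iUnion hd hm
  have h2 : Measure.sum (fun i => μ.restrict (s i)) ∈ MM μ := by
    rw [← hsum]
    exact restrict_mem_MM (MeasurableSet.iUnion hm) hK (iUnion_subset hsub)
  have := Hadd _ (fun i => restrict_mem_MM (hm i) hK (hsub i)) h2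
  rwa [← hsum] at this

lemma exists_density_on_compact (μ : Measure X) [μ.Regular] (F : Measure X → ℝ)
    (Hadd : ∀ ηi : ℕ → Measure X, (∀ i, ηi i ∈ MM μ) → Measure.sum ηi ∈ MM μ →
      HasSum (fun i => GFext μ F (ηi i)) (GFext μ F (Measure.sum ηi)))
    {K : Set X} (hK : IsCompact K) :
    ∃ g : X → ℝ, Integrable g (μ.restrict K) ∧
      ∀ A, MeasurableSet A → A ⊆ K → GFext μ F (μ.restrict A) = ∫ x in A, g x ∂μ := by
  haveI : IsFiniteMeasure (μ.restrict K) :=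
    ⟨by rw [Measure.restrict_apply_univ]; exact hK.measure_lt_top⟩
  have hKm : MeasurableSet K := hK.isClosed.measurableSet
  set v : SignedMeasure X :=
    { measureOf' := fun s => if MeasurableSet s then GFext μ F (μ.restrict (s ∩ K)) else 0
      empty' := by simp [GFext]
      not_measurable' := fun s hs => if_neg hs
      m_iUnion' := by
        intro s hm hd
        simp only [if_pos (hm _), if_pos (MeasurableSet.iUnion hm)]
        rw [iUnion_inter]
        exact GFext_restrict_hasSum Hadd hK (fun i => (hm i).inter hKm)
          (fun i j hij => Disjoint.mono inter_subset_left inter_subset_left (hd hij))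
          (fun i => inter_subset_right) } with hv
  have hac : v ≪ᵥ (μ.restrict K).toENNRealVectorMeasure := by
    refine VectorMeasure.AbsolutelyContinuous.mk fun s hs h0 => ?_
    rw [Measure.toENNRealVectorMeasure_apply_measurable hs,
      Measure.restrict_apply hs] at h0
    show (if MeasurableSet s then GFext μ F (μ.restrict (s ∩ K)) else 0) = 0
    rw [if_pos hs, Measure.restrict_eq_zero.mpr h0]
    simp [GFext]
  refine ⟨v.rnDeriv (μ.restrict K), SignedMeasure.integrable_rnDeriv _ _, ?_⟩
  intro A hA hAK
  have hwd := SignedMeasure.withDensityᵥ_rnDeriv_eq v (μ.restrict K) hac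
  have h1 : v A = ∫ x in A, v.rnDeriv (μ.restrict K) x ∂(μ.restrict K) := by
    rw [← MeasureTheory.withDensityᵥ_apply (SignedMeasure.integrable_rnDeriv _ _) hA, hwd]
  have h2 : v A = GFext μ F (μ.restrict A) := by
    show (if MeasurableSet A then GFext μ F (μ.restrict (A ∩ K)) else 0) = _
    rw [if_pos hA, inter_eq_left.mpr hAK]
  rw [← h2, h1]
  rw [Measure.restrict_restrict hA, inter_eq_left.mpr hAK]

end B

lemma binary_decomp {α : Type*} [MeasurableSpace α] (g : α → ℝ≥0∞)
    (hg1 : ∀ x, g x ≤ 1) (hgm : Measurable g) :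
    ∃ A : ℕ → Set α, (∀ m, MeasurableSet (A m)) ∧ (∀ m, A m ⊆ {x | g x ≠ 0}) ∧
      ∀ x, (∑' m, (A m).indicator (fun _ => ((2:ℝ≥0∞)⁻¹)^(m+1)) x) = g x := by
  set c : ℕ → ℝ≥0∞ := fun m => ((2:ℝ≥0∞)⁻¹)^(m+1) with hc
  let r : ℕ → α → ℝ≥0∞ := fun m => Nat.rec g
    (fun k rk => fun x => rk x - {y | c k ≤ rk y}.indicator (fun _ => c k) x) m
  have hrsucc : ∀ k, r (k+1) = fun x => r k x - {y | c k ≤ r k y}.indicator (fun _ => c k) x :=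
    fun k => rfl
  have hrm : ∀ m, Measurable (r m) := by
    intro m
    induction m with
    | zero => exact hgm
    | succ k ih =>
      rw [hrsucc]
      exact ih.sub (Measurable.indicator measurable_const (measurableSet_le measurable_const ih))
  set A : ℕ → Set α := fun m => {y | c m ≤ r m y} with hA
  have hAm : ∀ m, MeasurableSet (A m) := fun m => measurableSet_le measurable_const (hrm m)
  have hind_le : ∀ m x, (A m).indicator (fun _ => c m) x ≤ r m x := by
    intro m x
    rcases em (x ∈ A m) with h | h
    · rw [Set.indicator_of_mem h]; exact h
    · rw [Set.indicator_of_notMem h]; exact zero_le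
  have hbound : ∀ m x, r m x ≤ ((2:ℝ≥0∞)⁻¹)^m := by
    intro m
    induction m with
    | zero => intro x; rw [pow_zero]; exact hg1 x
    | succ k ih =>
      intro x
      have hrx : r (k+1) x = r k x - (A k).indicator (fun _ => c k) x := rfl
      rw [hrx]
      rcases em (x ∈ A k) with h | h
      · rw [Set.indicator_of_mem h]
        rw [tsub_le_iff_right]
        calc r k x ≤ ((2:ℝ≥0∞)⁻¹)^k := ih x
        _ = ((2:ℝ≥0∞)⁻¹)^(k+1) + c k := by
            rw [hc]
            rw [← two_mul, pow_succ]
            rw [mul_comm ((2:ℝ≥0∞)⁻¹^k) 2⁻¹, ← mul_assoc,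
              ENNReal.mul_inv_cancel two_ne_zero ENNReal.ofNat_ne_top, one_mul]
      · rw [Set.indicator_of_notMem h, tsub_zero]
        exact le_of_lt (lt_of_not_ge h)
  have hpartial : ∀ N x,
      (∑ m ∈ Finset.range N, (A m).indicator (fun _ => c m) x) + r N x = g x := by
    intro N x
    induction N with
    | zero => simp [r]
    | succ k ih =>
      have hrx : r (k+1) x = r k x - (A k).indicator (fun _ => c k) x := rfl
      rw [Finset.sum_range_succ, hrx, add_assoc,
        add_tsub_cancel_of_le (hind_le k x)]
      exact ih
  refine ⟨A, hAm, ?_, ?_⟩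
  · intro m x hx
    have h1 : c m ≤ r m x := hx
    have h2 : r m x ≤ g x := by
      have := hpartial m x
      calc r m x ≤ _ + r m x := le_add_self
      _ = g x := this
    have hcpos : (0:ℝ≥0∞) < c m := ENNReal.pow_pos (ENNReal.inv_pos.mpr ENNReal.ofNat_ne_top) _
    intro h
    exact absurd (le_antisymm (le_trans h1 (h2.trans_eq h)) (zero_le)) hcpos.ne'
  · intro x
    show (∑' m, (A m).indicator (fun _ => c m) x) = g x
    have hle : (∑' m, (A m).indicator (fun _ => c m) x) ≤ g x := by
      rw [ENNReal.tsum_eq_iSup_nat]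
      refine iSup_le fun N => ?_
      calc (∑ m ∈ Finset.range N, (A m).indicator (fun _ => c m) x)
          ≤ (∑ m ∈ Finset.range N, (A m).indicator (fun _ => c m) x) + r N x :=
            self_le_add_right _ _
      _ = g x := hpartial N x
    refine le_antisymm hle ?_
    have h1 : Tendsto (fun N => (∑ m ∈ Finset.range N, (A m).indicator (fun _ => c m) x))
        atTop (nhds (∑' m, (A m).indicator (fun _ => c m) x)) := ENNReal.tendsto_nat_tsum _
    have h2 : Tendsto (fun N => r N x) atTop (nhds 0) := by
      refine tendsto_of_tendsto_of_tendsto_of_le_of_le tendsto_const_nhds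
        (ENNReal.tendsto_pow_atTop_nhds_zero_of_lt_one ?_) (fun N => zero_le)
        (fun N => hbound N x)
      exact ENNReal.inv_lt_one.mpr ENNReal.one_lt_two
    have h3 : Tendsto (fun N => (∑ m ∈ Finset.range N, (A m).indicator (fun _ => c m) x) + r N x)
        atTop (nhds ((∑' m, (A m).indicator (fun _ => c m) x) + 0)) :=
      Tendsto.add h1 h2
    have h4 : Tendsto (fun _ : ℕ => g x) atTop
        (nhds ((∑' m, (A m).indicator (fun _ => c m) x) + 0)) := by
      refine Tendsto.congr (fun N => hpartial N x) h3
    rw [add_zero] at h4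
    exact le_of_eq (tendsto_nhds_unique tendsto_const_nhds h4)

end AuxLemmas


/-- `F : 𝓧 → ℝ` is of the form `F_f` for some `f ∈ L¹_loc(X)` iff
`G_F` is positively homogeneous for `t ∈ [0,1]` and countably additive on `𝓜`. -/

theorem stmt14 {X : Type*} [MetricSpace X] [MeasurableSpace X] [BorelSpace X]
    [LocallyCompactSpace X] [TopologicalSpace.SeparableSpace X]
    (μ : Measure X) [μ.Regular]
    (hμ : ∀ (x : X) (r : ℝ), 0 < r → 0 < μ (Metric.ball x r) ∧ μ (Metric.ball x r) < ⊤)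
    (F : Measure X → ℝ) :
    (∃ f : X → ℝ, LocallyIntegrable f μ ∧ ∀ η ∈ MM μ, η ≠ 0 → F η = FfM f η) ↔
    ((∀ t ∈ Icc (0:ℝ) 1, ∀ η ∈ MM μ,
        GFext μ F (ENNReal.ofReal t • η) = t * GFext μ F η) ∧
     (∀ ηi : ℕ → Measure X, (∀ i, ηi i ∈ MM μ) → Measure.sum ηi ∈ MM μ →
        HasSum (fun i => GFext μ F (ηi i)) (GFext μ F (Measure.sum ηi)))) := by
  
  haveI : SecondCountableTopology X := UniformSpace.secondCountable_of_separable X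
  constructor
  · rintro ⟨f, hf, hF⟩
    constructor
    · intro t ht η hη
      have h1 : ENNReal.ofReal t • η ∈ MM μ := by
        constructor
        · refine Measure.le_iff.mpr fun s hs => ?_
          rw [Measure.smul_apply, smul_eq_mul]
          calc ENNReal.ofReal t * η s ≤ 1 * μ s :=
            mul_le_mul' (ENNReal.ofReal_le_one.mpr ht.2) (Measure.le_iff.mp hη.1 s hs)
          _ = μ s := one_mul _
        · exact hη.2.of_isClosed_subset (isClosed_msupp _) (msupp_smul_subset _ _)
      rw [GFext_eq_integral hF h1, GFext_eq_integral hF hη, integral_smul_measure,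
        ENNReal.toReal_ofReal ht.1, smul_eq_mul]
    · intro ηi hi hsum
      have h := hasSum_integral_measure (μ := ηi) (f := f) (integrable_of_MM hf hsum)
      have e1 : (fun i => GFext μ F (ηi i)) = fun i => ∫ x, f x ∂(ηi i) :=
        funext fun i => GFext_eq_integral hF (hi i)
      rw [e1, GFext_eq_integral hF hsum]
      exact h
  · rintro ⟨Hhom, Hadd⟩
    set E : CompactExhaustion X := CompactExhaustion.choice X with hE
    choose g hg1 hg2 using fun n => exists_density_on_compact μ F Hadd (E.isCompact n)
    have hEx : ∀ x : X, ∃ n, x ∈ E n := E.exists_mem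
    set N : X → ℕ := fun x => Nat.find (hEx x) with hN
    set f : X → ℝ := fun x => g (N x) x with hf
    set B : ℕ → Set X := fun m => E m \ ⋃ k, ⋃ (_ : k < m), E k with hB
    have hBm : ∀ m, MeasurableSet (B m) := fun m =>
      ((E.isCompact m).isClosed.measurableSet).diff
        (MeasurableSet.iUnion fun k => MeasurableSet.iUnion fun _ =>
          (E.isCompact k).isClosed.measurableSet)
    have hBiff : ∀ (x : X) (m : ℕ), x ∈ B m ↔ N x = m := by
      intro x m
      constructor
      · rintro ⟨h1, h2⟩
        simp only [mem_iUnion, not_exists] at h2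
        exact (Nat.find_eq_iff (hEx x)).mpr ⟨h1, fun k hk => h2 k hk⟩
      · rintro rfl
        refine ⟨Nat.find_spec (hEx x), ?_⟩
        simp only [mem_iUnion, not_exists]
        exact fun k hk => Nat.find_min (hEx x) hk
    have hBd : Pairwise (Function.onFun Disjoint B) := by
      intro i j hij
      refine disjoint_left.mpr fun x hxi hxj => hij ?_
      rw [← (hBiff x i).mp hxi, ← (hBiff x j).mp hxj]
    have hBsub : ∀ m, B m ⊆ E m := fun m => diff_subset
    have hBU : ⋃ m, B m = univ :=
      eq_univ_of_forall fun x => mem_iUnion.mpr ⟨N x, (hBiff x (N x)).mpr rfl⟩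
    have hfB : ∀ m, EqOn f (g m) (B m) := by
      intro m x hx
      show g (N x) x = g m x
      rw [(hBiff x m).mp hx]
    have hcover : ∀ n (A : Set X), A ⊆ E n → A = ⋃ m ∈ Finset.range (n+1), A ∩ B m := by
      intro n A hAE
      apply subset_antisymm
      · intro x hx
        have hNx : N x ≤ n := Nat.find_min' (hEx x) (hAE hx)
        exact mem_biUnion (Finset.mem_range.mpr (Nat.lt_succ_of_le hNx))
          ⟨hx, (hBiff x (N x)).mpr rfl⟩
      · exact iUnion₂_subset fun m _ => inter_subset_left
    have hInt : ∀ n (A : Set X), MeasurableSet A → A ⊆ E n → IntegrableOn f A μ := by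
      intro n A hA hAE
      rw [hcover n A hAE]
      refine MeasureTheory.integrableOn_finset_iUnion.mpr fun m _ => ?_
      have h1 : IntegrableOn (g m) (A ∩ B m) μ :=
        (hg1 m).mono_measure
          (Measure.restrict_mono (inter_subset_right.trans (hBsub m)) le_rfl)
      exact h1.congr_fun (fun x hx => ((hfB m) hx.2).symm) (hA.inter (hBm m))
    have hMaster : ∀ n (A : Set X), MeasurableSet A → A ⊆ E n →
        GFext μ F (μ.restrict A) = ∫ x in A, f x ∂μ := by
      intro n A hA hAE
      have hdisj : Pairwise (Function.onFun Disjoint fun m => A ∩ B m) := fun i j hij =>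
        (hBd hij).mono inter_subset_right inter_subset_right
      have hmeas : ∀ m, MeasurableSet (A ∩ B m) := fun m => hA.inter (hBm m)
      have hU : (⋃ m, A ∩ B m) = A := by rw [← inter_iUnion, hBU, inter_univ]
      have h1 : HasSum (fun m => GFext μ F (μ.restrict (A ∩ B m)))
          (GFext μ F (μ.restrict A)) := by
        have := GFext_restrict_hasSum Hadd (E.isCompact n) hmeas hdisj
          (fun m => inter_subset_left.trans hAE)
        rwa [hU] at this
      have h2 : HasSum (fun m => ∫ x in A ∩ B m, f x ∂μ) (∫ x in A, f x ∂μ) := by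
        have := hasSum_integral_iUnion hmeas hdisj (hU ▸ hInt n A hA hAE)
        rwa [hU] at this
      have hterm : ∀ m, GFext μ F (μ.restrict (A ∩ B m)) = ∫ x in A ∩ B m, f x ∂μ := by
        intro m
        rw [hg2 m _ (hmeas m) (inter_subset_right.trans (hBsub m))]
        exact setIntegral_congr_fun (hmeas m) (fun x hx => ((hfB m) hx.2).symm)
      exact h1.unique (by rw [funext hterm]; exact h2)
    have hfli : LocallyIntegrable f μ := by
      refine (locallyIntegrable_iff).mpr fun K hK => ?_
      obtain ⟨n, hn⟩ := E.exists_superset_of_isCompact hK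
      exact hInt n K hK.isClosed.measurableSet hn
    refine ⟨f, hfli, ?_⟩
    intro η hη hne
    obtain ⟨n, hKn⟩ := E.exists_superset_of_isCompact hη.2
    set K : Set X := E n with hKdef
    have hKm : MeasurableSet K := (E.isCompact n).isClosed.measurableSet
    have hKc : IsCompact K := E.isCompact n
    haveI : IsFiniteMeasure η := ⟨univ_lt_top_of_MM hη⟩
    have hac : η ≪ μ := Measure.absolutelyContinuous_of_le hη.1
    have hwd : μ.withDensity (η.rnDeriv μ) = η := Measure.withDensity_rnDeriv_eq η μ hac
    have hg_le : η.rnDeriv μ ≤ᵐ[μ] 1 := Measure.rnDeriv_le_one_of_le hη.1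
    have hηKc : η Kᶜ = 0 :=
      measure_mono_null (compl_subset_compl.mpr hKn) (msupp_compl_null η)
    have hg0 : ∀ᵐ x ∂μ, x ∉ K → η.rnDeriv μ x = 0 := by
      have h0 : ∫⁻ x in Kᶜ, η.rnDeriv μ x ∂μ = 0 := by
        rw [← withDensity_apply _ hKm.compl, hwd]
        exact hηKc
      have h2 := (setLIntegral_eq_zero_iff hKm.compl (Measure.measurable_rnDeriv η μ)).mp h0
      filter_upwards [h2] with x hx hxk
      exact hx hxk
    set G : X → ℝ≥0∞ := fun x => if x ∈ K then min (η.rnDeriv μ x) 1 else 0 with hG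
    have hGm : Measurable G :=
      Measurable.ite hKm ((Measure.measurable_rnDeriv η μ).min measurable_const)
        measurable_const
    have hG1 : ∀ x, G x ≤ 1 := by
      intro x
      by_cases hxK : x ∈ K
      · show (if x ∈ K then min (η.rnDeriv μ x) 1 else 0) ≤ 1
        rw [if_pos hxK]
        exact min_le_right _ _
      · show (if x ∈ K then min (η.rnDeriv μ x) 1 else 0) ≤ 1
        rw [if_neg hxK]
        exact zero_le
    have hGae : G =ᵐ[μ] η.rnDeriv μ := by
      filter_upwards [hg_le, hg0] with x h1 h2
      show (if x ∈ K then min (η.rnDeriv μ x) 1 else 0) = η.rnDeriv μ x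
      by_cases hxK : x ∈ K
      · rw [if_pos hxK]
        exact min_eq_left h1
      · rw [if_neg hxK]
        exact (h2 hxK).symm
    have hηG : μ.withDensity G = η := by
      rw [withDensity_congr_ae hGae, hwd]
    have hGK : ∀ x, x ∉ K → G x = 0 := fun x hx => if_neg hx
    obtain ⟨A, hAm, hAne, hAsum⟩ := binary_decomp G hG1 hGm
    have hAK : ∀ m, A m ⊆ K := by
      intro m x hx
      by_contra hxK
      exact hAne m hx (hGK x hxK)
    set c : ℕ → ℝ≥0∞ := fun m => ((2:ℝ≥0∞)⁻¹)^(m+1) with hc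
    have hc1 : ∀ m, c m ≤ 1 := fun m =>
      pow_le_one' (ENNReal.inv_le_one.mpr one_le_two) _
    set ν : ℕ → Measure X := fun m => c m • μ.restrict (A m) with hν
    have hνMM : ∀ m, ν m ∈ MM μ := fun m =>
      smul_restrict_mem_MM (hc1 m) (hAm m) hKc (hAK m)
    have hν_eq : Measure.sum ν = η := by
      rw [← hηG]
      have h1 : μ.withDensity G =
          μ.withDensity (∑' m, (A m).indicator fun _ => c m) := by
        congr 1
        funext x
        rw [tsum_apply (Pi.summable.2 fun _ => ENNReal.summable)]
        exact (hAsum x).symm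
      rw [h1, withDensity_tsum (fun m => Measurable.indicator measurable_const (hAm m))]
      congr 1
      funext m
      rw [withDensity_indicator (hAm m), withDensity_const]
    have h1 : HasSum (fun m => GFext μ F (ν m)) (GFext μ F η) := by
      have := Hadd ν hνMM (by rw [hν_eq]; exact hη)
      rwa [hν_eq] at this
    have hInteta : Integrable f η := integrable_of_MM hfli hη
    have h2 : HasSum (fun m => ∫ x, f x ∂(ν m)) (∫ x, f x ∂η) := by
      have := hasSum_integral_measure (μ := ν) (f := f) (by rw [hν_eq]; exact hInteta)
      rwa [hν_eq] at this
    have hcr : ∀ m, c m = ENNReal.ofReal (((2:ℝ)⁻¹)^(m+1)) := by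
      intro m
      rw [ENNReal.ofReal_pow (by norm_num), ENNReal.ofReal_inv_of_pos two_pos,
        ENNReal.ofReal_ofNat]
    have hterm : ∀ m, GFext μ F (ν m) = ∫ x, f x ∂(ν m) := by
      intro m
      have ht : ((2:ℝ)⁻¹)^(m+1) ∈ Icc (0:ℝ) 1 :=
        ⟨by positivity, pow_le_one₀ (by norm_num) (by norm_num)⟩
      have hres : μ.restrict (A m) ∈ MM μ := restrict_mem_MM (hAm m) hKc (hAK m)
      have hhom := Hhom _ ht (μ.restrict (A m)) hres
      rw [← hcr m] at hhom
      rw [hν]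
      show GFext μ F (c m • μ.restrict (A m)) = ∫ x, f x ∂(c m • μ.restrict (A m))
      rw [hhom, integral_smul_measure, hMaster n (A m) (hAm m) (hAK m),
        hcr m, ENNReal.toReal_ofReal (by positivity), smul_eq_mul]
    have hGη : GFext μ F η = ∫ x, f x ∂η := h1.unique (by rw [funext hterm]; exact h2)
    have hmass : 0 < mass η := mass_pos_of_MM hη hne
    have : mass η * F η = ∫ x, f x ∂η := by
      rw [← hGη, GFext, if_pos ⟨hη, hne⟩]
    rw [FfM, ← this]
    field_simp
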